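/- Let N ≥ 2 and let F_N denote the free group of rank N with its standard basis. For g ∈ F_N, let ℓ(g) denote the cyclically reduced length of g, i.e. the minimum of the word lengths (with respect to the standard basis) of the elements in the conjugacy class of g. Let (g_n)_{n∈ℕ} be a sequence of automorphisms of F_N representing pairwise distinct outer automorphisms (for m ≠ n, g_n ∘ g_m⁻¹ is not inner), and let (c_n)_{n∈ℕ} be a sequence of nonnegative real numbers. Suppose that for every nontrivial w ∈ F_N the sequence of real numbers (c_n · ℓ(g_n(w)))_{n∈ℕ} converges. Then c_n → 0 as n → ∞. -/

import Mathlib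

set_option linter.unusedSectionVars false

namespace FGAux

open FreeGroup List

variable {α : Type*} [DecidableEq α]

abbrev β (α : Type*) := α × Bool

def invP (p : β α) : β α := (p.1, !p.2)

@[simp] lemma invP_invP (p : β α) : invP (invP p) = p := by simp [invP]

lemma invP_ne (p : β α) : invP p ≠ p := by simp [invP, Prod.ext_iff]

def R (l : List (β α)) : Prop := List.Chain' (fun x y => y ≠ invP x) l

lemma invRev_eq (l : List (β α)) : invRev l = (l.map invP).reverse := rfl

lemma head?_invRev (l : List (β α)) : (invRev l).head? = l.getLast?.map invP := by
  rw [invRev_eq, head?_reverse, getLast?_map]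

lemma getLast?_invRev (l : List (β α)) : (invRev l).getLast? = l.head?.map invP := by
  rw [invRev_eq, getLast?_reverse, head?_map]

lemma invRev_append (l₁ l₂ : List (β α)) :
    invRev (l₁ ++ l₂) = invRev l₂ ++ invRev l₁ := by
  simp [invRev_eq]

lemma invRev_cons (p : β α) (l : List (β α)) :
    invRev (p :: l) = invRev l ++ [invP p] := by
  simp [invRev_eq, invP]

lemma invRev_singleton (p : β α) : invRev [p] = [invP p] := by
  simp [invRev_eq, invP]


lemma R_nil : R ([] : List (β α)) := List.isChain_nil

lemma R_singleton (p : β α) : R [p] := List.isChain_singleton p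

lemma R_append {l₁ l₂ : List (β α)} (h₁ : R l₁) (h₂ : R l₂)
    (hj : ∀ x ∈ l₁.getLast?, ∀ y ∈ l₂.head?, y ≠ invP x) : R (l₁ ++ l₂) :=
  List.isChain_append.2 ⟨h₁, h₂, hj⟩

lemma R.of_append_left {l₁ l₂ : List (β α)} (h : R (l₁ ++ l₂)) : R l₁ :=
  (List.isChain_append.1 h).1

lemma R.of_append_right {l₁ l₂ : List (β α)} (h : R (l₁ ++ l₂)) : R l₂ :=
  (List.isChain_append.1 h).2.1

lemma R.junction {l₁ l₂ : List (β α)} (h : R (l₁ ++ l₂)) :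
    ∀ x ∈ l₁.getLast?, ∀ y ∈ l₂.head?, y ≠ invP x :=
  (List.isChain_append.1 h).2.2

lemma reduce_eq_self {l : List (β α)} (h : R l) : reduce l = l := by
  induction l with
  | nil => rfl
  | cons x t ih =>
    have ht : R t := h.tail
    rw [FreeGroup.reduce.cons, ih ht]
    cases t with
    | nil => rfl
    | cons y s =>
      have hxy : y ≠ invP x := List.isChain_cons_cons.1 h |>.1
      have : ¬ (x.1 = y.1 ∧ x.2 = !y.2) := by
        rintro ⟨h1, h2⟩
        apply hxy
        simp [invP, Prod.ext_iff, h1.symm, h2]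
      simp [this]

lemma R_reduce (l : List (β α)) : R (reduce l) := by
  induction l with
  | nil => exact R_nil
  | cons x t ih =>
    rw [FreeGroup.reduce.cons]
    cases h : reduce t with
    | nil => exact R_singleton x
    | cons y s =>
      rw [h] at ih
      by_cases hc : x.1 = y.1 ∧ x.2 = !y.2
      · simp only [hc, if_true]
        exact ih.tail
      · simp only [hc, if_false]
        refine List.isChain_cons_cons.2 ⟨?_, ih⟩
        intro he
        apply hc
        rw [he]
        simp [invP]

lemma R_toWord (x : FreeGroup α) : R x.toWord := by
  rw [← FreeGroup.reduce_toWord]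
  exact R_reduce _

lemma toWord_mk_of_R {l : List (β α)} (h : R l) : (FreeGroup.mk l).toWord = l := by
  rw [FreeGroup.toWord_mk, reduce_eq_self h]

lemma toWord_mul_of_R {l₁ l₂ : List (β α)} (h : R (l₁ ++ l₂)) :
    (FreeGroup.mk l₁ * FreeGroup.mk l₂).toWord = l₁ ++ l₂ := by
  rw [FreeGroup.mul_mk]; exact toWord_mk_of_R h

lemma norm_def (x : FreeGroup α) : norm x = x.toWord.length := rfl

lemma norm_mk_of_R {l : List (β α)} (h : R l) : norm (FreeGroup.mk l) = l.length := by
  rw [norm_def, toWord_mk_of_R h]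

/-- `|x| ≤ |x*y| + |y|` -/
lemma norm_le_norm_mul_add (x y : FreeGroup α) : norm x ≤ norm (x * y) + norm y := by
  have := norm_mul_le (x * y) y⁻¹
  simpa [norm_inv_eq] using this

lemma toWord_ne_nil {x : FreeGroup α} (hx : x ≠ 1) : x.toWord ≠ [] := by
  simpa [FreeGroup.toWord_eq_nil_iff] using hx

/-- cyclically reduced -/
def CR (l : List (β α)) : Prop := R (l ++ l)

lemma CR.r {l : List (β α)} (h : CR l) : R l := h.of_append_left

/-- a reduced but not cyclically reduced word has the form `σ :: mid ++ [invP σ]` -/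
lemma bad_junction_decomp {l : List (β α)} (hR : R l) (hcr : ¬ R (l ++ l)) :
    ∃ σ mid, l = σ :: (mid ++ [invP σ]) ∧ mid ≠ [] ∧ R mid := by
  have hbad : ¬ (∀ p ∈ l.getLast?, ∀ q ∈ l.head?, q ≠ invP p) := fun hj => hcr (R_append hR hR hj)
  push_neg at hbad
  obtain ⟨p, hp, q, hq, hqp⟩ := hbad
  cases l with
  | nil => simp at hp
  | cons a t =>
    obtain rfl : a = q := by
      rw [Option.mem_def, List.head?_cons, Option.some.injEq] at hq
      exact hq
    rcases List.eq_nil_or_concat t with rfl | ⟨mid, b, rfl⟩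
    · have hpa : p = a := by
        rw [Option.mem_def] at hp
        have h9 : a = p := by simpa using hp
        exact h9.symm
      subst hpa
      exact absurd hqp.symm (invP_ne p)
    · have hbp : b = p := by
        have h2 : (a :: mid.concat b).getLast? = some b := by
          rw [List.concat_eq_append, ← List.cons_append, List.getLast?_concat]
        rw [Option.mem_def, h2] at hp
        exact Option.some.inj hp
      subst hbp
      refine ⟨a, mid, ?_, ?_, ?_⟩
      · rw [List.concat_eq_append, hqp, invP_invP]
      · rintro rfl
        have h6 : R [a, b] := by simpa using hR
        have h7 : b ≠ invP a := (List.isChain_cons_cons.1 h6).1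
        apply h7
        rw [hqp, invP_invP]
      · have h3 : R (mid ++ [b]) := by
          have h8 := hR.tail
          simpa [R, List.Chain', List.concat_eq_append] using h8
        exact h3.of_append_left

/-- structural decomposition of a nontrivial element: `x = u h u⁻¹` with `h`
cyclically reduced and no cancellation anywhere. -/
lemma exists_decomp : ∀ (n : ℕ) (x : FreeGroup α), norm x ≤ n → x ≠ 1 →
    ∃ u h : FreeGroup α, x = u * h * u⁻¹ ∧ h ≠ 1 ∧ CR h.toWord ∧
      x.toWord = u.toWord ++ h.toWord ++ invRev u.toWord := by
  intro n
  induction n with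
  | zero =>
    intro x hn hx
    exact absurd (norm_eq_zero.1 (Nat.le_zero.1 hn)) hx
  | succ n ih =>
    intro x hn hx
    by_cases hcr : CR x.toWord
    · refine ⟨1, x, by group, hx, hcr, ?_⟩
      simp [FreeGroup.toWord_one, invRev]
    · have hR : R x.toWord := R_toWord x
      obtain ⟨q, mid, hwdec0, hmidne, hRmid⟩ := bad_junction_decomp hR hcr
      have hwdec : x.toWord = [q] ++ mid ++ [invP q] := by simp [hwdec0]
      set s : FreeGroup α := FreeGroup.mk [q] with hs
      set x' : FreeGroup α := FreeGroup.mk mid with hx'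
      have hxeq : x = s * x' * s⁻¹ := by
        have h1 : x = FreeGroup.mk (x.toWord) := (FreeGroup.mk_toWord).symm
        rw [hwdec] at h1
        have h2 : s * x' * s⁻¹ = FreeGroup.mk (([q] ++ mid) ++ [invP q]) := by
          rw [hs, hx', FreeGroup.inv_mk, invRev_singleton, FreeGroup.mul_mk, FreeGroup.mul_mk]
        rw [h1, h2, List.append_assoc]
      have htw' : x'.toWord = mid := toWord_mk_of_R hRmid
      have hn' : norm x' ≤ n := by
        have h3 : norm x = mid.length + 2 := by
          rw [norm_def, hwdec]; simp
        have h2 : norm x' = mid.length := by rw [norm_def, htw']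
        omega
      have hx'ne : x' ≠ 1 := by
        intro h1
        rw [h1] at htw'
        exact hmidne (by simpa [FreeGroup.toWord_one] using htw'.symm)
      obtain ⟨u', h, hdec, hne, hcr', htw⟩ := ih x' hn' hx'ne
      have hmid2 : mid = u'.toWord ++ h.toWord ++ invRev u'.toWord := by
        rw [← htw', htw]
      refine ⟨s * u', h, ?_, hne, hcr', ?_⟩
      · rw [hxeq, hdec]; group
      · have hju : ∀ a ∈ ([q] : List (β α)).getLast?, ∀ b ∈ u'.toWord.head?, b ≠ invP a := by
          intro a ha b hb
          obtain rfl : q = a := by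
            rw [Option.mem_def] at ha
            simpa using ha
          have hmid_head : mid.head? = some b := by
            rw [hmid2]
            rw [Option.mem_def] at hb
            cases hu : u'.toWord with
            | nil => rw [hu] at hb; simp at hb
            | cons c r =>
              rw [hu] at hb
              simp only [List.head?_cons, Option.some.injEq] at hb
              simp [hb]
          have hjw : R ([q] ++ (mid ++ [invP q])) := by
            have h5 := hR
            rw [hwdec] at h5
            simpa using h5
          have hbmem : b ∈ (mid ++ [invP q]).head? := by
            cases mid with
            | nil => exact absurd rfl hmidne
            | cons c r =>
              simp only [List.head?_cons, Option.some.injEq] at hmid_head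
              simp only [List.cons_append, List.head?_cons, Option.mem_def, Option.some.injEq]
              exact hmid_head
          exact hjw.junction q (by simp) b hbmem
        have hRu : R ([q] ++ u'.toWord) := R_append (R_singleton q) (R_toWord u') hju
        have htws : (s * u').toWord = q :: u'.toWord := by
          have h4 : s * u' = FreeGroup.mk ([q] ++ u'.toWord) := by
            rw [hs, ← FreeGroup.mul_mk]
            congr 1
            exact (FreeGroup.mk_toWord (x := u')).symm
          rw [h4, toWord_mk_of_R hRu]
          simp
        rw [htws, hwdec, hmid2, invRev_cons]
        simp

lemma R_invRev {l : List (β α)} (h : R l) : R (invRev l) := by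
  rw [invRev_eq]
  unfold R List.Chain' at h ⊢
  rw [List.isChain_reverse, List.isChain_map]
  refine h.imp ?_
  intro a b hab
  show invP a ≠ invP (invP b)
  rw [invP_invP]
  exact fun hh => hab hh.symm

lemma head?_flatten_replicate {l : List (β α)} (n : ℕ) {y : β α}
    (hy : y ∈ ((List.replicate n l).flatten).head?) : y ∈ l.head? := by
  induction n with
  | zero => simp at hy
  | succ m ih =>
    have hfl : (List.replicate (m+1) l).flatten = l ++ (List.replicate m l).flatten := by
      simp [List.replicate_succ]
    rw [hfl, List.head?_append] at hy
    rw [Option.mem_def, Option.or_eq_some_iff] at hy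
    rcases hy with h1 | ⟨h1, h2⟩
    · exact Option.mem_def.2 h1
    · exact ih (Option.mem_def.2 h2)

lemma R_flatten_replicate {l : List (β α)} (h : CR l) (n : ℕ) :
    R (List.replicate n l).flatten := by
  induction n with
  | zero => exact R_nil
  | succ n ih =>
    have hfl : (List.replicate (n+1) l).flatten = l ++ (List.replicate n l).flatten := by
      simp [List.replicate_succ]
    rw [hfl]
    refine R_append h.r ih ?_
    intro x hx y hy
    exact h.junction x hx y (head?_flatten_replicate n hy)

lemma length_flatten_replicate (n : ℕ) (l : List (β α)) :
    ((List.replicate n l).flatten).length = n * l.length := by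
  induction n with
  | zero => simp
  | succ m ih =>
    have hfl : (List.replicate (m+1) l).flatten = l ++ (List.replicate m l).flatten := by
      simp [List.replicate_succ]
    rw [hfl, List.length_append, ih]
    ring

lemma norm_pow_of_CR {x : FreeGroup α} (h : CR x.toWord) (n : ℕ) :
    norm (x ^ n) = n * norm x := by
  have h1 : x = FreeGroup.mk x.toWord := (FreeGroup.mk_toWord).symm
  have h2 : x ^ n = FreeGroup.mk ((List.replicate n x.toWord).flatten) := by
    conv_lhs => rw [h1]
    rw [FreeGroup.pow_mk]
  rw [h2, norm_mk_of_R (R_flatten_replicate h n), length_flatten_replicate]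
  rfl

lemma norm_pow_le (x : FreeGroup α) (n : ℕ) : norm (x ^ n) ≤ n * norm x := by
  induction n with
  | zero => simp
  | succ n ih =>
    rw [pow_succ]
    calc norm (x ^ n * x) ≤ norm (x ^ n) + norm x := norm_mul_le _ _
    _ ≤ n * norm x + norm x := by omega
    _ = (n+1) * norm x := by ring

/-- a cyclically reduced word has minimal length in its conjugacy class -/
lemma norm_le_norm_conj_of_CR {h : FreeGroup α} (hcr : CR h.toWord) (g : FreeGroup α) :
    norm h ≤ norm (g * h * g⁻¹) := by
  rcases Nat.eq_zero_or_pos (norm h) with h0 | hpos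
  · omega
  by_contra hlt
  push_neg at hlt
  have key : ∀ n : ℕ, n * norm h ≤ 2 * norm g + n * norm (g * h * g⁻¹) := by
    intro n
    have h1 : h ^ n = g⁻¹ * ((g * h * g⁻¹) ^ n) * g := by
      rw [conj_pow]
      group
    have h2 : norm (h ^ n) ≤ norm g⁻¹ + norm ((g * h * g⁻¹) ^ n) + norm g := by
      rw [h1]
      calc norm (g⁻¹ * (g * h * g⁻¹) ^ n * g)
          ≤ norm (g⁻¹ * (g * h * g⁻¹) ^ n) + norm g := norm_mul_le _ _
        _ ≤ norm g⁻¹ + norm ((g * h * g⁻¹) ^ n) + norm g := by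
            have := norm_mul_le g⁻¹ ((g * h * g⁻¹) ^ n)
            omega
    rw [norm_pow_of_CR hcr] at h2
    have h3 := norm_pow_le (g * h * g⁻¹) n
    rw [norm_inv_eq] at h2
    omega
  have hb : norm (g * h * g⁻¹) + 1 ≤ norm h := hlt
  have h4 := key (2 * norm g + 1)
  have h5 : (2 * norm g + 1) * (norm (g * h * g⁻¹) + 1) ≤ (2 * norm g + 1) * norm h :=
    Nat.mul_le_mul_left _ hb
  rw [Nat.mul_add, Nat.mul_one] at h5
  omega

/-- the conjugacy (cyclically reduced) length -/
noncomputable def cl (x : FreeGroup α) : ℕ :=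
  sInf { k : ℕ | ∃ h : FreeGroup α, IsConj x h ∧ h.toWord.length = k }

lemma norm_mem_cl_set (x c : FreeGroup α) :
    norm (c * x * c⁻¹) ∈ { k : ℕ | ∃ h : FreeGroup α, IsConj x h ∧ h.toWord.length = k } :=
  ⟨c * x * c⁻¹, isConj_iff.2 ⟨c, rfl⟩, rfl⟩

lemma cl_le_norm_conj (x c : FreeGroup α) : cl x ≤ norm (c * x * c⁻¹) :=
  Nat.sInf_le (norm_mem_cl_set x c)

lemma cl_le_norm (x : FreeGroup α) : cl x ≤ norm x := by
  have := cl_le_norm_conj x 1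
  simpa using this

/-- main description of `cl` via the decomposition -/
lemma cl_spec {x : FreeGroup α} (hx : x ≠ 1) :
    ∃ u h : FreeGroup α, x = u * h * u⁻¹ ∧ h ≠ 1 ∧ CR h.toWord ∧
      x.toWord = u.toWord ++ h.toWord ++ invRev u.toWord ∧ cl x = norm h := by
  obtain ⟨u, h, hdec, hne, hcr, htw⟩ := exists_decomp (norm x) x le_rfl hx
  refine ⟨u, h, hdec, hne, hcr, htw, ?_⟩
  apply _root_.le_antisymm
  · have heq : h = u⁻¹ * x * u⁻¹⁻¹ := by rw [hdec]; group
    have h2 := cl_le_norm_conj x u⁻¹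
    rw [← heq] at h2
    exact h2
  · have hsne : { k : ℕ | ∃ h' : FreeGroup α, IsConj x h' ∧ h'.toWord.length = k }.Nonempty :=
      ⟨norm x, ⟨x, IsConj.refl x, rfl⟩⟩
    apply le_csInf hsne
    rintro k ⟨h', hconj, hk⟩
    obtain ⟨c, hc⟩ := isConj_iff.1 hconj
    have heq : h' = (c * u) * h * (c * u)⁻¹ := by
      rw [← hc, hdec]; group
    have h3 := norm_le_norm_conj_of_CR hcr (c * u)
    rw [← heq] at h3
    rw [← hk]
    exact h3

lemma cl_conj (c x : FreeGroup α) : cl (c * x * c⁻¹) = cl x := by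
  unfold cl
  congr 1
  ext k
  constructor
  · rintro ⟨h', hconj, hk⟩
    exact ⟨h', (isConj_iff.2 ⟨c, rfl⟩).trans hconj, hk⟩
  · rintro ⟨h', hconj, hk⟩
    exact ⟨h', ((isConj_iff.2 ⟨c, rfl⟩).symm).trans hconj, hk⟩

lemma cl_pos {x : FreeGroup α} (hx : x ≠ 1) : 1 ≤ cl x := by
  obtain ⟨u, h, _, hne, _, _, hcl⟩ := cl_spec hx
  rw [hcl]
  have : norm h ≠ 0 := fun h0 => hne (norm_eq_zero.1 h0)
  omega

lemma cl_one : cl (1 : FreeGroup α) = 0 := by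
  have := cl_le_norm (1 : FreeGroup α)
  simpa using this

/-- any conjugate has length at least `cl` -/
lemma cl_le_norm_conj' (x g : FreeGroup α) : cl x ≤ norm (g⁻¹ * x * g) := by
  have := cl_le_norm_conj x g⁻¹
  simpa using this

/-! ### single-letter conjugation moves and the pair lemma -/

lemma mk_sandwich (σ : β α) (mid : List (β α)) :
    FreeGroup.mk ([σ] ++ mid ++ [invP σ]) = FreeGroup.mk [σ] * FreeGroup.mk mid * (FreeGroup.mk [σ])⁻¹ := by
  rw [FreeGroup.inv_mk, invRev_singleton, FreeGroup.mul_mk, FreeGroup.mul_mk]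

/-- M1 : conjugating `σ (mid) σ⁻¹` by `σ⁻¹` drops the norm by 2. -/
lemma sandwich_drop {σ : β α} {x : FreeGroup α} {mid : List (β α)}
    (hx : x.toWord = σ :: (mid ++ [invP σ])) :
    norm ((FreeGroup.mk [σ])⁻¹ * x * FreeGroup.mk [σ]) + 2 = norm x := by
  have hRx : R x.toWord := R_toWord x
  rw [hx] at hRx
  have hRmid : R mid := by
    have h2 : R (mid ++ [invP σ]) := by
      have := hRx.tail
      simpa [R, List.Chain'] using this
    exact h2.of_append_left
  have hxm : x = FreeGroup.mk [σ] * FreeGroup.mk mid * (FreeGroup.mk [σ])⁻¹ := by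
    rw [← mk_sandwich]
    conv_lhs => rw [← FreeGroup.mk_toWord (x := x)]
    rw [hx]
    exact rfl
  have hc : (FreeGroup.mk [σ])⁻¹ * x * FreeGroup.mk [σ] = FreeGroup.mk mid := by
    rw [hxm]; group
  rw [hc, norm_mk_of_R hRmid, norm_def, hx]
  simp

/-- M3' : if `x` starts with `σ` then conjugating by `σ⁻¹` does not increase the norm. -/
lemma head_conj_le {σ : β α} {x : FreeGroup α}
    (hx : x.toWord.head? = some σ) :
    norm ((FreeGroup.mk [σ])⁻¹ * x * FreeGroup.mk [σ]) ≤ norm x := by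
  obtain ⟨t, hw⟩ : ∃ t, x.toWord = σ :: t := by
    cases hw : x.toWord with
    | nil => rw [hw] at hx; simp at hx
    | cons c t =>
      rw [hw, List.head?_cons, Option.some.injEq] at hx
      subst hx
      exact ⟨t, rfl⟩
  have hxm : x = FreeGroup.mk [σ] * FreeGroup.mk t := by
    rw [FreeGroup.mul_mk]
    conv_lhs => rw [← FreeGroup.mk_toWord (x := x)]
    rw [hw]
    exact rfl
  have hc : (FreeGroup.mk [σ])⁻¹ * x * FreeGroup.mk [σ] = FreeGroup.mk (t ++ [σ]) := by
    rw [← FreeGroup.mul_mk]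
    rw [hxm]
    group
  rw [hc]
  calc norm (FreeGroup.mk (t ++ [σ])) ≤ (t ++ [σ]).length := norm_mk_le
  _ = t.length + 1 := by simp
  _ ≤ norm x := by rw [norm_def, hw]; simp

/-- M4' : if `x` ends with `σ⁻¹` then conjugating by `σ⁻¹` does not increase the norm. -/
lemma last_conj_le {σ : β α} {x : FreeGroup α}
    (hx : x.toWord.getLast? = some (invP σ)) :
    norm ((FreeGroup.mk [σ])⁻¹ * x * FreeGroup.mk [σ]) ≤ norm x := by
  rcases List.eq_nil_or_concat x.toWord with hw | ⟨t, c, hw⟩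
  · rw [hw] at hx; simp at hx
  · rw [hw, List.concat_eq_append, List.getLast?_concat] at hx
    obtain rfl : c = invP σ := by simpa using hx
    rw [List.concat_eq_append] at hw
    have hxm : x = FreeGroup.mk t * (FreeGroup.mk [σ])⁻¹ := by
      rw [FreeGroup.inv_mk, invRev_singleton, FreeGroup.mul_mk]
      conv_lhs => rw [← FreeGroup.mk_toWord (x := x)]
      rw [hw]
    have hc : (FreeGroup.mk [σ])⁻¹ * x * FreeGroup.mk [σ] = FreeGroup.mk ([invP σ] ++ t) := by
      rw [← FreeGroup.mul_mk, ← invRev_singleton, ← FreeGroup.inv_mk]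
      rw [hxm]
      group
    rw [hc]
    calc norm (FreeGroup.mk ([invP σ] ++ t)) ≤ ([invP σ] ++ t).length := norm_mk_le
    _ = t.length + 1 := by simp
    _ ≤ norm x := by rw [norm_def, hw]; simp

lemma cl_eq_norm_of_CR {x : FreeGroup α} (h : CR x.toWord) : cl x = norm x := by
  apply _root_.le_antisymm (cl_le_norm x)
  have hsne : { k : ℕ | ∃ h' : FreeGroup α, IsConj x h' ∧ h'.toWord.length = k }.Nonempty :=
    ⟨norm x, ⟨x, IsConj.refl x, rfl⟩⟩
  apply le_csInf hsne
  rintro k ⟨h', hconj, hk⟩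
  obtain ⟨c, hc⟩ := isConj_iff.1 hconj
  have h3 := norm_le_norm_conj_of_CR h c
  rw [hc] at h3
  rw [← hk]
  exact h3

/-- product of two elements whose words concatenate without cancellation,
cyclically as well: `cl (a*b) = |a| + |b|`. -/
lemma cl_prod_of_junctions {a₀ b₀ : FreeGroup α} (ha : a₀ ≠ 1) (hb : b₀ ≠ 1)
    (hj : ∀ x ∈ a₀.toWord.getLast?, ∀ y ∈ b₀.toWord.head?, y ≠ invP x)
    (hcyc : ∀ x ∈ b₀.toWord.getLast?, ∀ y ∈ a₀.toWord.head?, y ≠ invP x) :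
    cl (a₀ * b₀) = norm a₀ + norm b₀ := by
  have hR : R (a₀.toWord ++ b₀.toWord) := R_append (R_toWord _) (R_toWord _) hj
  have htw : (a₀ * b₀).toWord = a₀.toWord ++ b₀.toWord := by
    conv_lhs => rw [← FreeGroup.mk_toWord (x := a₀), ← FreeGroup.mk_toWord (x := b₀)]
    exact toWord_mul_of_R hR
  have hane := toWord_ne_nil ha
  have hbne := toWord_ne_nil hb
  have hcr : CR ((a₀ * b₀).toWord) := by
    rw [htw]
    unfold CR
    refine R_append hR hR ?_
    intro x hx y hy
    rw [List.getLast?_append_of_ne_nil _ hbne] at hx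
    rw [List.head?_append] at hy
    have hy' : y ∈ a₀.toWord.head? := by
      rw [Option.mem_def] at hy ⊢
      cases hh : a₀.toWord.head? with
      | none => exact absurd (List.head?_eq_none_iff.1 hh) hane
      | some z => rw [hh] at hy; simpa using hy
    exact hcyc x hx y hy'
  rw [cl_eq_norm_of_CR hcr, norm_def, htw, List.length_append]
  rfl

/-- heads and tails of a sandwich word -/
lemma sandwich_head_last {x u h : FreeGroup α} {σ : β α} {wu' : List (β α)}
    (htw : x.toWord = u.toWord ++ h.toWord ++ invRev u.toWord)
    (hu : u.toWord = σ :: wu') :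
    x.toWord.head? = some σ ∧ x.toWord.getLast? = some (invP σ) ∧
      x.toWord = σ :: ((wu' ++ h.toWord ++ invRev wu') ++ [invP σ]) := by
  have hshape : x.toWord = σ :: ((wu' ++ h.toWord ++ invRev wu') ++ [invP σ]) := by
    rw [htw, hu, invRev_cons]
    simp
  refine ⟨?_, ?_, hshape⟩
  · rw [hshape]; rfl
  · rw [hshape]
    rw [show σ :: ((wu' ++ h.toWord ++ invRev wu') ++ [invP σ]) =
      (σ :: (wu' ++ h.toWord ++ invRev wu')) ++ [invP σ] by simp]
    exact List.getLast?_concat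

/-- **Pair lemma**: there are conjugation-minimizing points for `a` and `b`
at distance at most `cl (a*b)` from each other. -/
lemma pair_lemma {a b : FreeGroup α} (ha : a ≠ 1) (hb : b ≠ 1) :
    ∃ p q : FreeGroup α, norm (p⁻¹ * a * p) = cl a ∧ norm (q⁻¹ * b * q) = cl b ∧
      norm (p⁻¹ * q) ≤ cl (a * b) := by
  classical
  -- minimize the sum of norms over simultaneous conjugation
  set f : FreeGroup α → ℕ := fun h => norm (h⁻¹ * a * h) + norm (h⁻¹ * b * h) with hf
  have hSne : (Set.range f).Nonempty := ⟨f 1, 1, rfl⟩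
  obtain ⟨h₀, hfh₀⟩ := Nat.sInf_mem hSne
  have hmin : ∀ h : FreeGroup α, f h₀ ≤ f h := by
    intro h
    rw [hfh₀]
    exact Nat.sInf_le ⟨h, rfl⟩
  set a₀ := h₀⁻¹ * a * h₀ with ha₀
  set b₀ := h₀⁻¹ * b * h₀ with hb₀
  have ha₀ne : a₀ ≠ 1 := by
    simp only [ha₀]
    intro hcon
    apply ha
    have : h₀ * (h₀⁻¹ * a * h₀) * h₀⁻¹ = h₀ * 1 * h₀⁻¹ := by rw [hcon]
    group at this
    simpa using this
  have hb₀ne : b₀ ≠ 1 := by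
    simp only [hb₀]
    intro hcon
    apply hb
    have : h₀ * (h₀⁻¹ * b * h₀) * h₀⁻¹ = h₀ * 1 * h₀⁻¹ := by rw [hcon]
    group at this
    simpa using this
  obtain ⟨u, A, hadec, hAne, hAcr, haw, hacl⟩ := cl_spec ha₀ne
  obtain ⟨v, B, hbdec, hBne, hBcr, hbw, hbcl⟩ := cl_spec hb₀ne
  -- letter-minimality
  have hletter : ∀ σ : β α,
      norm a₀ + norm b₀ ≤
        norm ((FreeGroup.mk [σ])⁻¹ * a₀ * FreeGroup.mk [σ]) +
        norm ((FreeGroup.mk [σ])⁻¹ * b₀ * FreeGroup.mk [σ]) := by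
    intro σ
    have h1 := hmin (h₀ * FreeGroup.mk [σ])
    have e1 : (h₀ * FreeGroup.mk [σ])⁻¹ * a * (h₀ * FreeGroup.mk [σ]) =
        (FreeGroup.mk [σ])⁻¹ * a₀ * FreeGroup.mk [σ] := by
      rw [ha₀]; group
    have e2 : (h₀ * FreeGroup.mk [σ])⁻¹ * b * (h₀ * FreeGroup.mk [σ]) =
        (FreeGroup.mk [σ])⁻¹ * b₀ * FreeGroup.mk [σ] := by
      rw [hb₀]; group
    simp only [hf, e1, e2] at h1
    exact h1
  -- norms of u, v are at most norms of a₀, b₀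
  have hua : norm u ≤ norm a₀ := by
    rw [norm_def, norm_def, haw]
    simp
  have hvb : norm v ≤ norm b₀ := by
    rw [norm_def, norm_def, hbw]
    simp
  -- conjugacy lengths transfer
  have hclA : cl a = norm A := by
    rw [← hacl, ha₀]
    have : h₀⁻¹ * a * h₀ = h₀⁻¹ * a * h₀⁻¹⁻¹ := by group
    rw [this, cl_conj]
  have hclB : cl b = norm B := by
    rw [← hbcl, hb₀]
    have : h₀⁻¹ * b * h₀ = h₀⁻¹ * b * h₀⁻¹⁻¹ := by group
    rw [this, cl_conj]
  have hclab : cl (a * b) = cl (a₀ * b₀) := by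
    have : a₀ * b₀ = h₀⁻¹ * (a * b) * h₀⁻¹⁻¹ := by rw [ha₀, hb₀]; group
    rw [this, cl_conj]
  -- the witnesses
  refine ⟨h₀ * u, h₀ * v, ?_, ?_, ?_⟩
  · have e3 : (h₀ * u)⁻¹ * a * (h₀ * u) = u⁻¹ * a₀ * u := by rw [ha₀]; group
    have e4 : u⁻¹ * a₀ * u = A := by rw [hadec]; group
    rw [e3, e4, hclA]
  · have e3 : (h₀ * v)⁻¹ * b * (h₀ * v) = v⁻¹ * b₀ * v := by rw [hb₀]; group
    have e4 : v⁻¹ * b₀ * v = B := by rw [hbdec]; group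
    rw [e3, e4, hclB]
  · have e5 : (h₀ * u)⁻¹ * (h₀ * v) = u⁻¹ * v := by group
    rw [e5, hclab]
    have huv : norm (u⁻¹ * v) ≤ norm u + norm v := by
      have := norm_mul_le u⁻¹ v
      rwa [norm_inv_eq] at this
    -- main case analysis
    have key : norm u + norm v ≤ cl (a₀ * b₀) := by
      cases hwu : u.toWord with
      | nil =>
        have hnu : norm u = 0 := by rw [norm_def, hwu]; rfl
        cases hwv : v.toWord with
        | nil =>
          have hnv : norm v = 0 := by rw [norm_def, hwv]; rfl
          omega
        | cons τ wv' =>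
          have ha₀A : a₀ = A := by
            have hu1 : u = 1 := FreeGroup.toWord_eq_nil_iff.1 hwu
            rw [hadec, hu1]; group
          obtain ⟨hbh, hbl, hbshape⟩ := sandwich_head_last hbw hwv
          have hdropb := sandwich_drop hbshape
          have hL := hletter τ
          have hAhead : ¬ (A.toWord.head? = some τ) := by
            intro hcon
            have := head_conj_le (σ := τ) (x := a₀) (by rw [ha₀A]; exact hcon)
            omega
          have hAlast : ¬ (A.toWord.getLast? = some (invP τ)) := by
            intro hcon
            have := last_conj_le (σ := τ) (x := a₀) (by rw [ha₀A]; exact hcon)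
            omega
          have hprod := cl_prod_of_junctions ha₀ne hb₀ne ?_ ?_
          · rw [hprod]; omega
          · intro x hx y hy
            have hy' : y = τ := by rw [Option.mem_def, hbh] at hy; exact (by simpa using hy : _ = y).symm
            subst hy'
            intro hcon
            apply hAlast
            have hx' : A.toWord.getLast? = some x := by rw [← ha₀A]; exact hx
            rw [hx', hcon, invP_invP]
          · intro x hx y hy
            have hx' : x = invP τ := by rw [Option.mem_def, hbl] at hx; exact (by simpa using hx : _ = x).symm
            subst hx'
            rw [invP_invP]
            intro hcon
            apply hAhead
            have hy' : A.toWord.head? = some y := by rw [← ha₀A]; exact hy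
            rw [hy', hcon]
      | cons σ wu' =>
        obtain ⟨hah, hal, hashape⟩ := sandwich_head_last haw hwu
        have hdropa := sandwich_drop hashape
        cases hwv : v.toWord with
        | nil =>
          have hnv : norm v = 0 := by rw [norm_def, hwv]; rfl
          have hb₀B : b₀ = B := by
            have hv1 : v = 1 := FreeGroup.toWord_eq_nil_iff.1 hwv
            rw [hbdec, hv1]; group
          have hL := hletter σ
          have hBhead : ¬ (B.toWord.head? = some σ) := by
            intro hcon
            have := head_conj_le (σ := σ) (x := b₀) (by rw [hb₀B]; exact hcon)
            omega
          have hBlast : ¬ (B.toWord.getLast? = some (invP σ)) := by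
            intro hcon
            have := last_conj_le (σ := σ) (x := b₀) (by rw [hb₀B]; exact hcon)
            omega
          have hprod := cl_prod_of_junctions ha₀ne hb₀ne ?_ ?_
          · rw [hprod]; omega
          · intro x hx y hy
            have hx' : x = invP σ := by rw [Option.mem_def, hal] at hx; exact (by simpa using hx : _ = x).symm
            subst hx'
            rw [invP_invP]
            intro hcon
            apply hBhead
            have hy' : B.toWord.head? = some y := by rw [← hb₀B]; exact hy
            rw [hy', hcon]
          · intro x hx y hy
            have hy' : y = σ := by rw [Option.mem_def, hah] at hy; exact (by simpa using hy : _ = y).symm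
            subst hy'
            intro hcon
            apply hBlast
            have hx' : B.toWord.getLast? = some x := by rw [← hb₀B]; exact hx
            rw [hx', hcon, invP_invP]
        | cons τ wv' =>
          obtain ⟨hbh, hbl, hbshape⟩ := sandwich_head_last hbw hwv
          by_cases hστ : τ = σ
          · subst hστ
            have hdropb := sandwich_drop hbshape
            have hL := hletter τ
            omega
          · have hprod := cl_prod_of_junctions ha₀ne hb₀ne ?_ ?_
            · rw [hprod]; omega
            · intro x hx y hy
              have hx' : x = invP σ := by rw [Option.mem_def, hal] at hx; exact (by simpa using hx : _ = x).symm
              subst hx'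
              have hy' : y = τ := by rw [Option.mem_def, hbh] at hy; exact (by simpa using hy : _ = y).symm
              subst hy'
              rw [invP_invP]
              exact hστ
            · intro x hx y hy
              have hx' : x = invP τ := by rw [Option.mem_def, hbl] at hx; exact (by simpa using hx : _ = x).symm
              subst hx'
              have hy' : y = σ := by rw [Option.mem_def, hah] at hy; exact (by simpa using hy : _ = y).symm
              subst hy'
              rw [invP_invP]
              exact fun hcon => hστ hcon.symm
    omega

/-! ### common prefix and medians -/

def cp : List (β α) → List (β α) → List (β α)
  | a :: as, b :: bs => if a = b then a :: cp as bs else []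
  | _, _ => []

lemma cp_spec : ∀ (l₁ l₂ : List (β α)), ∃ r₁ r₂,
    l₁ = cp l₁ l₂ ++ r₁ ∧ l₂ = cp l₁ l₂ ++ r₂ ∧
    (∀ x ∈ r₁.head?, ∀ y ∈ r₂.head?, x ≠ y) := by
  intro l₁
  induction l₁ with
  | nil =>
    intro l₂
    exact ⟨[], l₂, by simp [cp], by cases l₂ <;> simp [cp], by simp⟩
  | cons a as ih =>
    intro l₂
    cases l₂ with
    | nil => exact ⟨a :: as, [], by simp [cp], by simp [cp], by simp⟩
    | cons b bs =>
      by_cases hab : a = b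
      · subst hab
        obtain ⟨r₁, r₂, h1, h2, h3⟩ := ih bs
        refine ⟨r₁, r₂, ?_, ?_, h3⟩
        · simp only [cp, if_pos rfl, if_true, List.cons_append]
          rw [← h1]
        · simp only [cp, if_pos rfl, if_true, List.cons_append]
          rw [← h2]
      · refine ⟨a :: as, b :: bs, ?_, ?_, ?_⟩
        · simp [cp, hab]
        · simp [cp, hab]
        · intro x hx y hy
          have hx' : x = a := by simpa using (by simpa using hx : _ = x).symm
          have hy' : y = b := by simpa using (by simpa using hy : _ = y).symm
          rw [hx', hy']
          exact hab

/-- median point of three vertices in the tree -/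
lemma median (a b c : FreeGroup α) : ∃ m : FreeGroup α,
    norm (a⁻¹ * m) + norm (m⁻¹ * b) = norm (a⁻¹ * b) ∧
    norm (a⁻¹ * m) + norm (m⁻¹ * c) = norm (a⁻¹ * c) ∧
    norm (b⁻¹ * m) + norm (m⁻¹ * c) = norm (b⁻¹ * c) := by
  classical
  obtain ⟨r₁, r₂, h1, h2, h3⟩ := cp_spec (a⁻¹ * b).toWord (a⁻¹ * c).toWord
  set p := cp (a⁻¹ * b).toWord (a⁻¹ * c).toWord with hp
  have hRw₁ : R (a⁻¹ * b).toWord := R_toWord _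
  have hRw₂ : R (a⁻¹ * c).toWord := R_toWord _
  have hRp : R p := by rw [h1] at hRw₁; exact hRw₁.of_append_left
  have hRr₁ : R r₁ := by rw [h1] at hRw₁; exact hRw₁.of_append_right
  have hRr₂ : R r₂ := by rw [h2] at hRw₂; exact hRw₂.of_append_right
  refine ⟨a * FreeGroup.mk p, ?_, ?_, ?_⟩
  all_goals {
    have ham : a⁻¹ * (a * FreeGroup.mk p) = FreeGroup.mk p := by group
    have hmb : (a * FreeGroup.mk p)⁻¹ * b = FreeGroup.mk r₁ := by
      have hab : a⁻¹ * b = FreeGroup.mk p * FreeGroup.mk r₁ := by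
        rw [FreeGroup.mul_mk, ← h1]
        exact (FreeGroup.mk_toWord).symm
      calc (a * FreeGroup.mk p)⁻¹ * b = (FreeGroup.mk p)⁻¹ * (a⁻¹ * b) := by group
      _ = (FreeGroup.mk p)⁻¹ * (FreeGroup.mk p * FreeGroup.mk r₁) := by rw [hab]
      _ = FreeGroup.mk r₁ := by group
    have hmc : (a * FreeGroup.mk p)⁻¹ * c = FreeGroup.mk r₂ := by
      have hac : a⁻¹ * c = FreeGroup.mk p * FreeGroup.mk r₂ := by
        rw [FreeGroup.mul_mk, ← h2]
        exact (FreeGroup.mk_toWord).symm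
      calc (a * FreeGroup.mk p)⁻¹ * c = (FreeGroup.mk p)⁻¹ * (a⁻¹ * c) := by group
      _ = (FreeGroup.mk p)⁻¹ * (FreeGroup.mk p * FreeGroup.mk r₂) := by rw [hac]
      _ = FreeGroup.mk r₂ := by group
    have hbc : b⁻¹ * c = FreeGroup.mk (invRev r₁ ++ r₂) := by
      calc b⁻¹ * c = ((a * FreeGroup.mk p)⁻¹ * b)⁻¹ * ((a * FreeGroup.mk p)⁻¹ * c) := by group
      _ = (FreeGroup.mk r₁)⁻¹ * FreeGroup.mk r₂ := by rw [hmb, hmc]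
      _ = FreeGroup.mk (invRev r₁ ++ r₂) := by rw [FreeGroup.inv_mk, FreeGroup.mul_mk]
    have hRbc : R (invRev r₁ ++ r₂) := by
      refine R_append (R_invRev hRr₁) hRr₂ ?_
      intro x hx y hy
      rw [getLast?_invRev] at hx
      rw [Option.mem_def, Option.map_eq_some_iff] at hx
      obtain ⟨z, hz, rfl⟩ := hx
      intro hcon
      rw [invP_invP] at hcon
      exact h3 z (Option.mem_def.2 hz) y hy hcon.symm |>.elim
    first
    | (rw [ham, hmb, norm_mk_of_R hRp, norm_mk_of_R hRr₁, norm_def, h1]; simp)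
    | (rw [ham, hmc, norm_mk_of_R hRp, norm_mk_of_R hRr₂, norm_def, h2]; simp)
    | (rw [show b⁻¹ * (a * FreeGroup.mk p) = ((a * FreeGroup.mk p)⁻¹ * b)⁻¹ by group,
          hmb, hmc, hbc, norm_inv_eq, norm_mk_of_R hRr₁, norm_mk_of_R hRr₂,
          norm_mk_of_R hRbc]; simp [invRev_length])
  }

/-! ### quasiconvexity of displacement functions -/

lemma toWord_mul_junction {x y : FreeGroup α}
    (hj : ∀ p ∈ x.toWord.getLast?, ∀ q ∈ y.toWord.head?, q ≠ invP p) :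
    (x * y).toWord = x.toWord ++ y.toWord := by
  have hR : R (x.toWord ++ y.toWord) := R_append (R_toWord _) (R_toWord _) hj
  conv_lhs => rw [← FreeGroup.mk_toWord (x := x), ← FreeGroup.mk_toWord (x := y)]
  exact toWord_mul_of_R hR

lemma norm_mul_junction {x y : FreeGroup α}
    (hj : ∀ p ∈ x.toWord.getLast?, ∀ q ∈ y.toWord.head?, q ≠ invP p) :
    norm (x * y) = norm x + norm y := by
  rw [norm_def, toWord_mul_junction hj, List.length_append]
  rfl

/-- if `|a⁻¹ b| = |a| + |b|` with `a, b ≠ 1`, their words have different heads -/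
lemma heads_ne_of_btw {a b : FreeGroup α} (ha : a ≠ 1) (hb : b ≠ 1)
    (hbtw : norm (a⁻¹ * b) = norm a + norm b)
    {σ : β α} (hha : a.toWord.head? = some σ) (hhb : b.toWord.head? = some σ) : False := by
  obtain ⟨ta, hwa⟩ : ∃ t, a.toWord = σ :: t := by
    cases hw : a.toWord with
    | nil => rw [hw] at hha; simp at hha
    | cons c t =>
      rw [hw, List.head?_cons, Option.some.injEq] at hha
      subst hha
      exact ⟨t, rfl⟩
  obtain ⟨tb, hwb⟩ : ∃ t, b.toWord = σ :: t := by
    cases hw : b.toWord with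
    | nil => rw [hw] at hhb; simp at hhb
    | cons c t =>
      rw [hw, List.head?_cons, Option.some.injEq] at hhb
      subst hhb
      exact ⟨t, rfl⟩
  have hae : a = FreeGroup.mk [σ] * FreeGroup.mk ta := by
    rw [FreeGroup.mul_mk]
    conv_lhs => rw [← FreeGroup.mk_toWord (x := a)]
    rw [hwa]
    exact rfl
  have hbe : b = FreeGroup.mk [σ] * FreeGroup.mk tb := by
    rw [FreeGroup.mul_mk]
    conv_lhs => rw [← FreeGroup.mk_toWord (x := b)]
    rw [hwb]
    exact rfl
  have hab : a⁻¹ * b = (FreeGroup.mk ta)⁻¹ * FreeGroup.mk tb := by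
    rw [hae, hbe]; group
  have h1 : norm (a⁻¹ * b) ≤ ta.length + tb.length := by
    rw [hab]
    calc norm ((FreeGroup.mk ta)⁻¹ * FreeGroup.mk tb)
        ≤ norm (FreeGroup.mk ta)⁻¹ + norm (FreeGroup.mk tb) := by
          have := norm_mul_le (FreeGroup.mk ta)⁻¹ (FreeGroup.mk tb)
          simpa [norm_inv_eq] using this
      _ ≤ ta.length + tb.length := by
          have h2 := norm_mk_le (L₁ := ta)
          have h3 := norm_mk_le (L₁ := tb)
          have h4 : norm (FreeGroup.mk ta)⁻¹ = norm (FreeGroup.mk ta) := norm_inv_eq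
          omega
  have h5 : norm a = ta.length + 1 := by rw [norm_def, hwa]; simp
  have h6 : norm b = tb.length + 1 := by rw [norm_def, hwb]; simp
  omega

/-- core quasiconvexity: if `1` lies between `a` and `b` then the displacement of `y`
at `1` is at most the max of the displacements at `a` and `b`. -/
lemma qc_core {a b y : FreeGroup α}
    (hbtw : norm (a⁻¹ * b) = norm a + norm b) :
    norm y ≤ max (norm (a⁻¹ * y * a)) (norm (b⁻¹ * y * b)) := by
  rcases eq_or_ne y 1 with rfl | hy
  · simp
  rcases le_or_gt (norm y) (norm (a⁻¹ * y * a)) with hle | hlt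
  · exact le_max_of_le_left hle
  rcases eq_or_ne a 1 with rfl | hane
  · simp at hlt
  rcases eq_or_ne b 1 with rfl | hbne
  · apply le_max_of_le_right
    simp
  -- exploit norm (a⁻¹ y a) < norm y
  obtain ⟨σ, ta, hwa⟩ : ∃ σ t, a.toWord = σ :: t := by
    cases hw : a.toWord with
    | nil => exact absurd (FreeGroup.toWord_eq_nil_iff.1 hw) hane
    | cons c t => exact ⟨c, t, rfl⟩
  -- Q1 : y's head is σ
  have hq1 : y.toWord.head? = some σ := by
    by_contra hcon
    have hj : ∀ p ∈ (a⁻¹).toWord.getLast?, ∀ q ∈ y.toWord.head?, q ≠ invP p := by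
      intro p hp q hq
      rw [FreeGroup.toWord_inv, getLast?_invRev, Option.mem_def, Option.map_eq_some_iff] at hp
      obtain ⟨z, hz, rfl⟩ := hp
      rw [hwa] at hz
      have hz' : z = σ := by simpa using (by simpa using hz : _ = z).symm
      subst hz'
      rw [invP_invP]
      intro hqσ
      apply hcon
      rw [Option.mem_def] at hq
      rw [hq, hqσ]
    have h1 : norm (a⁻¹ * y) = norm a + norm y := by
      rw [norm_mul_junction hj, norm_inv_eq]
    have h2 : norm (a⁻¹ * y) ≤ norm (a⁻¹ * y * a) + norm a := norm_le_norm_mul_add _ _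
    omega
  -- Q2 : y's last is invP σ
  have hq2 : y.toWord.getLast? = some (invP σ) := by
    by_contra hcon
    have hj : ∀ p ∈ y.toWord.getLast?, ∀ q ∈ a.toWord.head?, q ≠ invP p := by
      intro p hp q hq
      rw [hwa] at hq
      have hq' : q = σ := by simpa using (by simpa using hq : _ = q).symm
      subst hq'
      intro hσp
      apply hcon
      rw [Option.mem_def] at hp
      rw [hp]
      rw [hσp, invP_invP]
    have h1 : norm (y * a) = norm y + norm a := norm_mul_junction hj
    have h2 : norm (y * a) ≤ norm a + norm (a⁻¹ * (y * a)) := by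
      have heq : y * a = a * (a⁻¹ * (y * a)) := by group
      calc norm (y * a) = norm (a * (a⁻¹ * (y * a))) := by rw [← heq]
      _ ≤ norm a + norm (a⁻¹ * (y * a)) := norm_mul_le _ _
    have h3 : a⁻¹ * (y * a) = a⁻¹ * y * a := by group
    rw [h3] at h2
    omega
  -- now the b-side junction is clean
  apply le_max_of_le_right
  obtain ⟨τ, tb, hwb⟩ : ∃ τ t, b.toWord = τ :: t := by
    cases hw : b.toWord with
    | nil => exact absurd (FreeGroup.toWord_eq_nil_iff.1 hw) hbne
    | cons c t => exact ⟨c, t, rfl⟩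
  have hτσ : τ ≠ σ := by
    intro hcon
    subst hcon
    exact heads_ne_of_btw hane hbne hbtw (by rw [hwa]; rfl) (by rw [hwb]; rfl)
  have hj : ∀ p ∈ y.toWord.getLast?, ∀ q ∈ b.toWord.head?, q ≠ invP p := by
    intro p hp q hq
    rw [Option.mem_def, hq2] at hp
    obtain rfl : p = invP σ := by simpa using (by simpa using hp : _ = p).symm
    rw [hwb] at hq
    obtain rfl : q = τ := by simpa using (by simpa using hq : _ = q).symm
    rw [invP_invP]
    exact hτσ
  have h1 : norm (y * b) = norm y + norm b := norm_mul_junction hj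
  have h2 : norm (y * b) ≤ norm b + norm (b⁻¹ * (y * b)) := by
    have heq : y * b = b * (b⁻¹ * (y * b)) := by group
    calc norm (y * b) = norm (b * (b⁻¹ * (y * b))) := by rw [← heq]
    _ ≤ norm b + norm (b⁻¹ * (y * b)) := norm_mul_le _ _
  have h3 : b⁻¹ * (y * b) = b⁻¹ * y * b := by group
  rw [h3] at h2
  omega

/-- general quasiconvexity along betweenness -/
lemma qc {y aa bb m : FreeGroup α}
    (hbtw : norm (aa⁻¹ * m) + norm (m⁻¹ * bb) = norm (aa⁻¹ * bb)) :
    norm (m⁻¹ * y * m) ≤ max (norm (aa⁻¹ * y * aa)) (norm (bb⁻¹ * y * bb)) := by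
  have hbtw' : norm ((m⁻¹ * aa)⁻¹ * (m⁻¹ * bb)) = norm (m⁻¹ * aa) + norm (m⁻¹ * bb) := by
    have e1 : (m⁻¹ * aa)⁻¹ * (m⁻¹ * bb) = aa⁻¹ * bb := by group
    have e2 : norm (m⁻¹ * aa) = norm (aa⁻¹ * m) := by
      rw [show m⁻¹ * aa = (aa⁻¹ * m)⁻¹ by group, norm_inv_eq]
    rw [e1, e2]
    omega
  have hcore := qc_core (a := m⁻¹ * aa) (b := m⁻¹ * bb) (y := m⁻¹ * y * m) hbtw'
  have e3 : (m⁻¹ * aa)⁻¹ * (m⁻¹ * y * m) * (m⁻¹ * aa) = aa⁻¹ * y * aa := by group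
  have e4 : (m⁻¹ * bb)⁻¹ * (m⁻¹ * y * m) * (m⁻¹ * bb) = bb⁻¹ * y * bb := by group
  rw [e3, e4] at hcore
  exact hcore

/-! ### convexity and the Helly property -/

def Conv (S : Set (FreeGroup α)) : Prop :=
  ∀ a ∈ S, ∀ b ∈ S, ∀ m : FreeGroup α,
    norm (a⁻¹ * m) + norm (m⁻¹ * b) = norm (a⁻¹ * b) → m ∈ S

lemma helly : ∀ (n : ℕ) (S : Fin n → Set (FreeGroup α)), (∀ i, Conv (S i)) →
    (∀ i j, (S i ∩ S j).Nonempty) → (⋂ i, S i).Nonempty := by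
  intro n
  induction n with
  | zero =>
    intro S _ _
    exact ⟨1, Set.mem_iInter.2 (fun i => i.elim0)⟩
  | succ m ih =>
    intro S hconv hpair
    cases m with
    | zero =>
      obtain ⟨x, hx⟩ := hpair 0 0
      exact ⟨x, Set.mem_iInter.2 (fun i => by rw [Fin.eq_zero i]; exact hx.1)⟩
    | succ k =>
      set T : Fin (k+1) → Set (FreeGroup α) :=
        fun i => S i.castSucc ∩ S (Fin.last (k+1)) with hT
      have hTconv : ∀ i, Conv (T i) := by
        intro i a ha b hb mm hm
        exact ⟨hconv _ a ha.1 b hb.1 mm hm, hconv _ a ha.2 b hb.2 mm hm⟩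
      have hTpair : ∀ i j, (T i ∩ T j).Nonempty := by
        intro i j
        obtain ⟨a, ha⟩ := hpair i.castSucc j.castSucc
        obtain ⟨b, hb⟩ := hpair i.castSucc (Fin.last (k+1))
        obtain ⟨c, hc⟩ := hpair j.castSucc (Fin.last (k+1))
        obtain ⟨mm, h1, h2, h3⟩ := median a b c
        refine ⟨mm, ⟨⟨?_, ?_⟩, ⟨?_, ?_⟩⟩⟩
        · exact hconv _ a ha.1 b hb.1 mm h1
        · exact hconv _ b hb.2 c hc.2 mm h3
        · exact hconv _ a ha.2 c hc.1 mm h2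
        · exact hconv _ b hb.2 c hc.2 mm h3
      obtain ⟨x, hx⟩ := ih T hTconv hTpair
      rw [Set.mem_iInter] at hx
      refine ⟨x, Set.mem_iInter.2 ?_⟩
      intro i
      refine Fin.lastCases ?_ ?_ i
      · exact (hx 0).2
      · intro j
        exact (hx j).1

/-- **Key lemma** : a tuple of nontrivial elements with bounded pairwise conjugacy
lengths can be simultaneously conjugated to have bounded norms. -/
lemma key_lemma (n : ℕ) (y : Fin n → FreeGroup α) (C : ℕ)
    (hy : ∀ i, y i ≠ 1) (h1 : ∀ i, cl (y i) ≤ C)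
    (h2 : ∀ i j, i ≠ j → cl (y i * y j) ≤ C) :
    ∃ g : FreeGroup α, ∀ i, norm (g⁻¹ * y i * g) ≤ 3 * C := by
  classical
  set S : Fin n → Set (FreeGroup α) :=
    fun i => {g | norm (g⁻¹ * y i * g) ≤ cl (y i) + 2 * C} with hS
  have hconv : ∀ i, Conv (S i) := by
    intro i a ha b hb mm hm
    have := qc (y := y i) (aa := a) (bb := b) (m := mm) hm
    simp only [hS, Set.mem_setOf_eq] at ha hb ⊢
    rcases max_cases (norm (a⁻¹ * y i * a)) (norm (b⁻¹ * y i * b)) with ⟨hmax, _⟩ | ⟨hmax, _⟩ <;>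
      rw [hmax] at this <;> omega
  have hpair : ∀ i j, (S i ∩ S j).Nonempty := by
    intro i j
    rcases eq_or_ne i j with rfl | hij
    · obtain ⟨u, A, hdec, _, _, _, hclA⟩ := cl_spec (hy i)
      refine ⟨u, ?_, ?_⟩ <;>
      · simp only [hS, Set.mem_setOf_eq]
        have e : u⁻¹ * y i * u = A := by rw [hdec]; group
        rw [e, ← hclA]
        omega
    · obtain ⟨p, q, hp, hq, hpq⟩ := pair_lemma (hy i) (hy j)
      refine ⟨p, ?_, ?_⟩
      · simp only [hS, Set.mem_setOf_eq, hp]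
        omega
      · simp only [hS, Set.mem_setOf_eq]
        have e : p⁻¹ * y j * p = (p⁻¹ * q) * (q⁻¹ * y j * q) * (p⁻¹ * q)⁻¹ := by group
        have hb1 : norm (p⁻¹ * y j * p) ≤
            norm (p⁻¹ * q) + norm (q⁻¹ * y j * q) + norm (p⁻¹ * q) := by
          rw [e]
          calc norm ((p⁻¹ * q) * (q⁻¹ * y j * q) * (p⁻¹ * q)⁻¹)
              ≤ norm ((p⁻¹ * q) * (q⁻¹ * y j * q)) + norm (p⁻¹ * q)⁻¹ := norm_mul_le _ _
            _ ≤ norm (p⁻¹ * q) + norm (q⁻¹ * y j * q) + norm (p⁻¹ * q) := by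
                have := norm_mul_le (p⁻¹ * q) (q⁻¹ * y j * q)
                have h4 : norm (p⁻¹ * q)⁻¹ = norm (p⁻¹ * q) := norm_inv_eq
                omega
        have hC := h2 i j hij
        rw [hq] at hb1
        omega
  obtain ⟨g, hg⟩ := helly n S hconv hpair
  rw [Set.mem_iInter] at hg
  refine ⟨g, fun i => ?_⟩
  have := hg i
  simp only [hS, Set.mem_setOf_eq] at this
  have := h1 i
  omega

/-- finiteness of balls in the free group -/
lemma ball_finite [Fintype α] (R : ℕ) : {x : FreeGroup α | norm x ≤ R}.Finite := by
  have h1 : {x : FreeGroup α | norm x ≤ R} =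
      FreeGroup.toWord ⁻¹' {l : List (β α) | l.length ≤ R} := rfl
  rw [h1]
  exact Set.Finite.preimage (Set.injOn_of_injective FreeGroup.toWord_injective)
    (List.finite_length_le _ R)

end FGAux

/-- An automorphism of a group is inner if it is conjugation by a fixed element. -/
def IsInnerAut {G : Type*} [Group G] (φ : MulAut G) : Prop :=
  ∃ a : G, ∀ x : G, φ x = a * x * a⁻¹

/-- The cyclically reduced length of `g ∈ F_N`: the minimum of the word lengths
(with respect to the standard basis) of the elements conjugate to `g`. -/
noncomputable def cyclicallyReducedLength {N : ℕ} (g : FreeGroup (Fin N)) : ℕ :=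
  sInf { k : ℕ | ∃ h : FreeGroup (Fin N), IsConj g h ∧ h.toWord.length = k }

lemma crl_eq_cl {N : ℕ} (g : FreeGroup (Fin N)) : cyclicallyReducedLength g = FGAux.cl g := rfl

/-- If `(g_n)` is a sequence of automorphisms of `F_N` (`N ≥ 2`) representing pairwise
distinct outer automorphisms, `c_n ≥ 0`, and for every nontrivial `w` the sequence
`c_n · ℓ(g_n(w))` converges, then `c_n → 0`. -/
theorem tendsto_scalars_zero_of_convergence
    (N : ℕ) (hN : 2 ≤ N)
    (g : ℕ → MulAut (FreeGroup (Fin N)))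
    (hdist : ∀ m n : ℕ, m ≠ n → ¬ IsInnerAut (g n * (g m)⁻¹))
    (c : ℕ → ℝ) (hc : ∀ n, 0 ≤ c n)
    (hconv : ∀ w : FreeGroup (Fin N), w ≠ 1 →
      ∃ L : ℝ, Filter.Tendsto
        (fun n : ℕ => c n * (cyclicallyReducedLength ((g n) w) : ℝ))
        Filter.atTop (nhds L)) :
    Filter.Tendsto c Filter.atTop (nhds 0) := by
  classical
  by_contra hnot
  rw [Metric.tendsto_atTop] at hnot
  push_neg at hnot
  obtain ⟨ε, hε, hNN⟩ := hnot
  have hI : {n : ℕ | ε ≤ c n}.Infinite := by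
    rw [← Nat.frequently_atTop_iff_infinite, Filter.frequently_atTop]
    intro M
    obtain ⟨n, hn1, hn2⟩ := hNN M
    refine ⟨n, hn1, ?_⟩
    rwa [Real.dist_eq, sub_zero, abs_of_nonneg (hc n)] at hn2
  -- the finite family of test words
  let w : (Fin N ⊕ (Fin N × Fin N)) → FreeGroup (Fin N) := fun j =>
    match j with
    | Sum.inl i => FreeGroup.of i
    | Sum.inr (i, k) => FreeGroup.of i * FreeGroup.of k
  have hwne : ∀ j, w j ≠ 1 := by
    rintro (i | ⟨i, k⟩)
    · exact FreeGroup.of_ne_one i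
    · intro hcon
      have hj : ∀ p ∈ (FreeGroup.of i).toWord.getLast?,
          ∀ q ∈ (FreeGroup.of k).toWord.head?, q ≠ FGAux.invP p := by
        intro p hp q hq
        rw [FreeGroup.toWord_of] at hp hq
        have hp' : p = (i, true) := by
          rw [Option.mem_def] at hp
          simpa using (by simpa using hp : _ = p).symm
        have hq' : q = (k, true) := by
          rw [Option.mem_def] at hq
          simpa using (by simpa using hq : _ = q).symm
        subst hp'; subst hq'
        simp [FGAux.invP]
      have h2 := FGAux.norm_mul_junction hj
      have h3 : w (Sum.inr (i, k)) = FreeGroup.of i * FreeGroup.of k := rfl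
      rw [← h3, hcon] at h2
      simp [FreeGroup.norm_of] at h2
  have hlim : ∀ j, ∃ L : ℝ, Filter.Tendsto
      (fun n : ℕ => c n * (FGAux.cl ((g n) (w j)) : ℝ)) Filter.atTop (nhds L) := by
    intro j
    obtain ⟨L, hL⟩ := hconv (w j) (hwne j)
    exact ⟨L, by simpa [crl_eq_cl] using hL⟩
  choose L hL using hlim
  have hev : ∀ j, ∃ n₀ : ℕ, ∀ n ≥ n₀, c n * (FGAux.cl ((g n) (w j)) : ℝ) < L j + 1 := by
    intro j
    have h1 := (hL j).eventually_lt_const (lt_add_one (L j))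
    rwa [Filter.eventually_atTop] at h1
  choose n₀ hn₀ using hev
  set Nbig := Finset.univ.sup n₀ with hNbig
  set C : ℕ := Finset.univ.sup (fun j : Fin N ⊕ (Fin N × Fin N) => ⌈(L j + 1) / ε⌉₊) with hC
  set good := {n : ℕ | ε ≤ c n} \ {n : ℕ | n < Nbig} with hgood
  have hgoodinf : good.Infinite := hI.diff (Set.finite_lt_nat Nbig)
  have hbound : ∀ n ∈ good, ∀ j, FGAux.cl ((g n) (w j)) ≤ C := by
    intro n hn j
    have h1 : n₀ j ≤ n := by
      have := Finset.le_sup (f := n₀) (Finset.mem_univ j)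
      have h2 : ¬ n < Nbig := hn.2
      omega
    have h2 := hn₀ j n h1
    have h3 : ε ≤ c n := hn.1
    have hcl0 : (0:ℝ) ≤ (FGAux.cl ((g n) (w j)) : ℝ) := Nat.cast_nonneg _
    have h4 : (FGAux.cl ((g n) (w j)) : ℝ) ≤ (L j + 1) / ε := by
      rw [le_div_iff₀ hε]
      nlinarith
    have h5 : (FGAux.cl ((g n) (w j)) : ℝ) ≤ (⌈(L j + 1) / ε⌉₊ : ℝ) :=
      le_trans h4 (Nat.le_ceil _)
    have h6 : FGAux.cl ((g n) (w j)) ≤ ⌈(L j + 1) / ε⌉₊ := by exact_mod_cast h5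
    have h7 : ⌈(L j + 1) / ε⌉₊ ≤ C := by
      rw [hC]
      exact Finset.le_sup (f := fun j => ⌈(L j + 1) / ε⌉₊) (Finset.mem_univ j)
    exact le_trans h6 h7
  have htup : ∀ n : ℕ, ∃ t : Fin N → FreeGroup (Fin N),
      n ∈ good → ((∀ i, FreeGroup.norm (t i) ≤ 3 * C) ∧
        ∃ gg : FreeGroup (Fin N), ∀ i, t i = gg⁻¹ * ((g n) (FreeGroup.of i)) * gg) := by
    intro n
    by_cases hn : n ∈ good
    · obtain ⟨gg, hgg⟩ := FGAux.key_lemma N (fun i => (g n) (FreeGroup.of i)) C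
        (fun i => by
          intro hcon
          exact FreeGroup.of_ne_one i (EmbeddingLike.map_eq_one_iff.1 hcon))
        (fun i => hbound n hn (Sum.inl i))
        (fun i k hik => by
          have h7 := hbound n hn (Sum.inr (i, k))
          have h8 : (g n) (w (Sum.inr (i, k))) = (g n) (FreeGroup.of i) * (g n) (FreeGroup.of k) :=
            map_mul _ _ _
          rwa [h8] at h7)
      exact ⟨fun i => gg⁻¹ * ((g n) (FreeGroup.of i)) * gg, fun _ => ⟨hgg, gg, fun i => rfl⟩⟩
    · exact ⟨fun _ => 1, fun hcon => absurd hcon hn⟩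
  choose τ hτ using htup
  have hmapsTo : Set.MapsTo τ good
      (Set.pi Set.univ (fun _ : Fin N => {x : FreeGroup (Fin N) | FreeGroup.norm x ≤ 3 * C})) := by
    intro n hn
    rw [Set.mem_pi]
    intro i _
    exact (hτ n hn).1 i
  have hfin : (Set.pi Set.univ
      (fun _ : Fin N => {x : FreeGroup (Fin N) | FreeGroup.norm x ≤ 3 * C})).Finite :=
    Set.Finite.pi (fun _ => FGAux.ball_finite _)
  obtain ⟨m, hm, n, hn, hmn, heq⟩ := hgoodinf.exists_ne_map_eq_of_mapsTo hmapsTo hfin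
  obtain ⟨hbm, gm, hgm⟩ := hτ m hm
  obtain ⟨hbn, gn, hgn⟩ := hτ n hn
  set a := gn * gm⁻¹ with ha
  have hgen : ∀ i : Fin N, (g n) (FreeGroup.of i) = a * ((g m) (FreeGroup.of i)) * a⁻¹ := by
    intro i
    have h1 : gm⁻¹ * ((g m) (FreeGroup.of i)) * gm = gn⁻¹ * ((g n) (FreeGroup.of i)) * gn := by
      rw [← hgm i, ← hgn i, heq]
    have h2 : gn * (gm⁻¹ * ((g m) (FreeGroup.of i)) * gm) * gn⁻¹ =
        gn * (gn⁻¹ * ((g n) (FreeGroup.of i)) * gn) * gn⁻¹ := by rw [h1]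
    calc (g n) (FreeGroup.of i) = gn * (gn⁻¹ * ((g n) (FreeGroup.of i)) * gn) * gn⁻¹ := by group
    _ = gn * (gm⁻¹ * ((g m) (FreeGroup.of i)) * gm) * gn⁻¹ := by rw [h1]
    _ = a * ((g m) (FreeGroup.of i)) * a⁻¹ := by rw [ha]; group
  have hall : ∀ x : FreeGroup (Fin N), (g n) x = a * ((g m) x) * a⁻¹ := by
    have hhom := FreeGroup.ext_hom (MulEquiv.toMonoidHom (g n : MulAut (FreeGroup (Fin N))))
      ((MulAut.conj a).toMonoidHom.comp (MulEquiv.toMonoidHom (g m : MulAut (FreeGroup (Fin N)))))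
      (fun i => by
        simp only [MulEquiv.toMonoidHom_eq_coe, MonoidHom.coe_comp, MonoidHom.coe_coe,
          Function.comp_apply, MulAut.conj_apply]
        exact hgen i)
    intro x
    have := DFunLike.congr_fun hhom x
    simpa using this
  apply hdist m n hmn
  refine ⟨a, fun x => ?_⟩
  have h2 : (g n * (g m)⁻¹) x = (g n) ((g m)⁻¹ x) := rfl
  rw [h2, hall ((g m)⁻¹ x)]
  have h3 : (g m) ((g m)⁻¹ x) = x := by simp
  rw [h3]
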